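/- Let σ, λ, and ω be such that |𝔽_{𝕋ⁿ}σ(k,m)| ≤ ω(k) λ(m) for all k,m ∈ ħℤⁿ, with λ ∈ ℓ¹(ħℤⁿ) nonnegative and ω: ħℤⁿ → (0,∞) satisfying ω(k) → 0 as |k| → ∞. Then Op(σ): ℓᵖ(ħℤⁿ) → ℓᵖ(ħℤⁿ) is a compact operator for every 1 ≤ p < ∞. -/

import Mathlib

open MeasureTheory Complex ENNReal

noncomputable section

variable {α : Type*} [DecidableEq α] {p : ℝ≥0∞} [hp1 : Fact (1 ≤ p)]

lemma p_ne_zero : p ≠ 0 := by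
  intro h0
  have := hp1.out
  rw [h0] at this
  exact (not_le.mpr zero_lt_one) (by exact_mod_cast this)

lemma memℓp_of_le (hp2 : p ≠ ⊤) {c : ℝ} (hc : 0 ≤ c) {f g : α → ℂ} (hg : Memℓp g p)
    (h : ∀ k, ‖f k‖ ≤ c * ‖g k‖) : Memℓp f p := by
  have hpt : 0 < p.toReal := ENNReal.toReal_pos p_ne_zero hp2
  apply memℓp_gen
  have hsumg := hg.summable hpt
  refine Summable.of_nonneg_of_le (fun k => Real.rpow_nonneg (norm_nonneg _) _)
    (fun k => ?_) (hsumg.mul_left (c ^ p.toReal))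
  calc ‖f k‖ ^ p.toReal ≤ (c * ‖g k‖) ^ p.toReal :=
        Real.rpow_le_rpow (norm_nonneg _) (h k) hpt.le
    _ = c ^ p.toReal * ‖g k‖ ^ p.toReal := Real.mul_rpow hc (norm_nonneg _)

lemma lp_norm_le_of_le (hp2 : p ≠ ⊤) {c : ℝ} (hc : 0 ≤ c) (f g : lp (fun _ : α => ℂ) p)
    (h : ∀ k, ‖(f : α → ℂ) k‖ ≤ c * ‖(g : α → ℂ) k‖) : ‖f‖ ≤ c * ‖g‖ := by
  have hpt : 0 < p.toReal := ENNReal.toReal_pos p_ne_zero hp2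
  rw [lp.norm_eq_tsum_rpow hpt f, lp.norm_eq_tsum_rpow hpt g]
  have hsumg : Summable (fun k => ‖(g : α → ℂ) k‖ ^ p.toReal) := (lp.memℓp g).summable hpt
  have hsumf : Summable (fun k => ‖(f : α → ℂ) k‖ ^ p.toReal) := (lp.memℓp f).summable hpt
  have step1 : (∑' k, ‖(f : α → ℂ) k‖ ^ p.toReal) ≤ c ^ p.toReal * ∑' k, ‖(g : α → ℂ) k‖ ^ p.toReal := by
    rw [← tsum_mul_left]
    refine Summable.tsum_le_tsum (fun k => ?_) hsumf (hsumg.mul_left _)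
    calc ‖(f : α → ℂ) k‖ ^ p.toReal ≤ (c * ‖(g : α → ℂ) k‖) ^ p.toReal :=
          Real.rpow_le_rpow (norm_nonneg _) (h k) hpt.le
      _ = c ^ p.toReal * ‖(g : α → ℂ) k‖ ^ p.toReal := Real.mul_rpow hc (norm_nonneg _)
  calc (∑' k, ‖(f : α → ℂ) k‖ ^ p.toReal) ^ (1 / p.toReal)
      ≤ (c ^ p.toReal * ∑' k, ‖(g : α → ℂ) k‖ ^ p.toReal) ^ (1 / p.toReal) :=
        Real.rpow_le_rpow (tsum_nonneg fun _ => Real.rpow_nonneg (norm_nonneg _) _) step1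
          (by positivity)
    _ = c * (∑' k, ‖(g : α → ℂ) k‖ ^ p.toReal) ^ (1 / p.toReal) := by
        rw [Real.mul_rpow (Real.rpow_nonneg hc _)
          (tsum_nonneg fun _ => Real.rpow_nonneg (norm_nonneg _) _), ← Real.rpow_mul hc,
          mul_one_div_cancel hpt.ne', Real.rpow_one]

/-- Coordinate evaluation as a continuous linear map. -/
def lpEval (p : ℝ≥0∞) [Fact (1 ≤ p)] (k : α) : lp (fun _ : α => ℂ) p →L[ℂ] ℂ :=
  LinearMap.mkContinuous
    { toFun := fun f => f k
      map_add' := fun f g => by simp [lp.coeFn_add]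
      map_smul' := fun c f => by simp [lp.coeFn_smul] } 1
    fun f => by rw [one_mul]; exact lp.norm_apply_le_norm p_ne_zero f k

@[simp] lemma lpEval_apply (k : α) (f : lp (fun _ : α => ℂ) p) :
    lpEval p k f = (f : α → ℂ) k := rfl

/-- Truncation to a finite set as a continuous linear map on `ℓᵖ`. -/
def lpProj (p : ℝ≥0∞) [Fact (1 ≤ p)] (hp2 : p ≠ ⊤) (S : Finset α) :
    lp (fun _ : α => ℂ) p →L[ℂ] lp (fun _ : α => ℂ) p :=
  LinearMap.mkContinuous
    { toFun := fun f => ⟨fun k => if k ∈ S then (f : α → ℂ) k else 0,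
        memℓp_of_le hp2 zero_le_one (lp.memℓp f) fun k => by
          split_ifs <;> simp⟩
      map_add' := fun f g => by
        ext k
        simp only [lp.coeFn_add, Pi.add_apply]
        change _ = (if k ∈ S then _ else 0) + (if k ∈ S then _ else 0)
        split_ifs <;> simp [lp.coeFn_add]
      map_smul' := fun c f => by
        ext k
        change (if k ∈ S then ((c • f : lp (fun _ : α => ℂ) p) : α → ℂ) k else 0)
          = c • (if k ∈ S then (f : α → ℂ) k else 0)
        rw [lp.coeFn_smul, Pi.smul_apply]
        split_ifs <;> simp } 1
    fun f => by
      refine lp_norm_le_of_le hp2 zero_le_one _ f fun k => ?_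
      change ‖if k ∈ S then (f : α → ℂ) k else 0‖ ≤ _
      split_ifs <;> simp

@[simp] lemma lpProj_apply (hp2 : p ≠ ⊤) (S : Finset α) (f : lp (fun _ : α => ℂ) p) (k : α) :
    ((lpProj p hp2 S f : lp (fun _ : α => ℂ) p) : α → ℂ) k
      = if k ∈ S then (f : α → ℂ) k else 0 := rfl

/-- A continuous linear map into `ℓᵖ` whose range is supported on a finite set is compact. -/
lemma isCompactOperator_of_finite_support {M : Type*} [NormedAddCommGroup M] [NormedSpace ℂ M]
    (hp2 : p ≠ ⊤) (S : Finset α) (B : M →L[ℂ] lp (fun _ : α => ℂ) p)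
    (hB : ∀ x, ∀ k ∉ S, ((B x : lp (fun _ : α => ℂ) p) : α → ℂ) k = 0) :
    IsCompactOperator B := by
  set E := lp (fun _ : α => ℂ) p
  set V : Submodule ℂ E := Submodule.span ℂ (Set.range fun k : S => lp.single p (k : α) (1 : ℂ))
  haveI : FiniteDimensional ℂ V := FiniteDimensional.span_of_finite ℂ (Set.finite_range _)
  haveI : ProperSpace V := FiniteDimensional.proper ℂ V
  have hmem : ∀ x : M, B x ∈ V := by
    intro x
    have hrepr : B x = ∑ k ∈ S, ((B x : E) : α → ℂ) k • lp.single p k (1 : ℂ) := by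
      ext j
      rw [lp.coeFn_sum]
      simp only [Finset.sum_apply]
      by_cases hj : j ∈ S
      · rw [Finset.sum_eq_single j]
        · simp [lp.coeFn_smul, lp.single_apply_self]
        · intro b _ hbj
          simp [lp.coeFn_smul, lp.single_apply_ne p b _ hbj.symm, Pi.single_apply, hbj.symm]
        · exact fun h => absurd hj h
      · rw [Finset.sum_eq_zero, hB x j hj]
        intro b hb
        have : j ≠ b := fun h => hj (h ▸ hb)
        simp [lp.coeFn_smul, lp.single_apply_ne p b _ this, Pi.single_apply, this]
    rw [hrepr]
    exact Submodule.sum_mem _ fun k hk =>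
      Submodule.smul_mem _ _ (Submodule.subset_span ⟨⟨k, hk⟩, rfl⟩)
  refine ⟨(↑) '' Metric.closedBall (0 : V) ‖B‖, (isCompact_closedBall _ _).image
    continuous_subtype_val, ?_⟩
  have hball : Metric.ball (0 : M) 1 ⊆ B ⁻¹' ((↑) '' Metric.closedBall (0 : V) ‖B‖) := by
    intro x hx
    rw [Metric.mem_ball, dist_zero_right] at hx
    refine ⟨⟨B x, hmem x⟩, ?_, rfl⟩
    rw [Metric.mem_closedBall, dist_zero_right]
    calc ‖(⟨B x, hmem x⟩ : V)‖ = ‖B x‖ := rfl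
      _ ≤ ‖B‖ * ‖x‖ := B.le_opNorm x
      _ ≤ ‖B‖ * 1 := by
          exact mul_le_mul_of_nonneg_left hx.le (norm_nonneg _)
      _ = ‖B‖ := mul_one _
  exact Filter.mem_of_superset (Metric.ball_mem_nhds 0 one_pos) hball

/-- Cheap translation equivalences on an additive group. -/
def addLeftEquiv {G : Type*} [AddGroup G] (j : G) : G ≃ G where
  toFun k := j + k
  invFun k := -j + k
  left_inv k := by simp
  right_inv k := by simp

def addRightEquiv {G : Type*} [AddGroup G] (k : G) : G ≃ G where
  toFun j := j + k
  invFun j := j - k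
  left_inv j := by simp
  right_inv j := by simp

def subRightEquiv {G : Type*} [AddGroup G] (k : G) : G ≃ G where
  toFun m := m - k
  invFun m := m + k
  left_inv m := by simp
  right_inv m := by simp



abbrev Zn (n : ℕ) := Fin n → ℤ

/-- The fundamental domain of the torus `𝕋ⁿ = ℝⁿ/ℤⁿ`. -/
def box (n : ℕ) : Set (Fin n → ℝ) := Set.univ.pi fun _ => Set.Ioc (0:ℝ) 1

/-- `e^{2πi k·θ}`. -/
def eChar (n : ℕ) (k : Zn n) (θ : Fin n → ℝ) : ℂ :=
  Complex.exp (2 * Real.pi * Complex.I * (∑ j, (k j : ℂ) * (θ j : ℂ)))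

/-- The (semi-classical) Fourier transform on the lattice (`ħℤⁿ` identified with `ℤⁿ`,
so that `(k·θ)/ħ = m·θ` for `k = ħm`): `𝔽f(θ) = ∑_k e^{-2πi k·θ} f(k)`. -/
def latticeFT (n : ℕ) (f : Zn n → ℂ) (θ : Fin n → ℝ) : ℂ :=
  ∑' k : Zn n, Complex.exp (-(2 * Real.pi * Complex.I) * (∑ j, (k j : ℂ) * (θ j : ℂ))) * f k

/-- Euclidean norm of an integer lattice point. -/
def znorm (n : ℕ) (k : Zn n) : ℝ := Real.sqrt (∑ j, ((k j : ℝ))^2)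

set_option maxHeartbeats 1000000 in
/-- If `|𝔽_{𝕋ⁿ}σ(k,m)| ≤ ω(k)λ(m)` with `λ ∈ ℓ¹` nonnegative and `ω(k) → 0` as `|k| → ∞`,
then `Op(σ) : ℓᵖ(ħℤⁿ) → ℓᵖ(ħℤⁿ)` is compact for every `1 ≤ p < ∞`. -/
theorem lp_compactness
    (n : ℕ) (hbar : ℝ) (hh0 : 0 < hbar) (hh1 : hbar ≤ 1)
    (p : ℝ≥0∞) [hp1 : Fact (1 ≤ p)] (hp2 : p ≠ ⊤)
    (lam : Zn n → ℝ) (hlam0 : ∀ m, 0 ≤ lam m) (hlam : Summable lam)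
    (ω : Zn n → ℝ) (hω0 : ∀ k, 0 < ω k)
    (hωlim : Filter.Tendsto ω Filter.cofinite (nhds 0))
    (σ : Zn n → (Fin n → ℝ) → ℂ) (hmeas : ∀ k, Measurable (σ k))
    (Fσ : Zn n → Zn n → ℂ)
    (hFσ : ∀ k m : Zn n, Fσ k m = ∫ θ in box n, (eChar n m θ)⁻¹ * σ k θ)
    (hbound : ∀ k m : Zn n, ‖Fσ k m‖ ≤ ω k * lam m)
    (T : lp (fun _ : Zn n => ℂ) p →L[ℂ] lp (fun _ : Zn n => ℂ) p)
    (hT : ∀ (g : lp (fun _ : Zn n => ℂ) p) (k : Zn n),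
      (T g : Zn n → ℂ) k = ∑' m : Zn n, (g : Zn n → ℂ) m * Fσ k (m - k)) :
    IsCompactOperator T := by
  classical
  set E := lp (fun _ : Zn n => ℂ) p with hE
  have hp0 : p ≠ 0 := p_ne_zero
  have hpt : 0 < p.toReal := ENNReal.toReal_pos hp0 hp2
  set L : ℝ := ∑' m, lam m with hL
  have hL0 : 0 ≤ L := tsum_nonneg hlam0
  have key : ∀ (ε : ℝ), 0 < ε → ∀ S : Finset (Zn n), (∀ k ∉ S, ω k ≤ ε) →
      ‖T - (lpProj p hp2 S).comp T‖ ≤ ε * L := by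
    intro ε hε S hS
    refine ContinuousLinearMap.opNorm_le_bound _ (by positivity) fun g => ?_
    have hgs : Summable (fun m => ‖(g : Zn n → ℂ) m‖ ^ p.toReal) := (lp.memℓp g).summable hpt
    have hgb : ∀ m, ‖(g : Zn n → ℂ) m‖ ≤ ‖g‖ := fun m => lp.norm_apply_le_norm hp0 g m
    set w : Zn n → E := fun j =>
      ⟨fun k => ((lam j * ‖(g : Zn n → ℂ) (j + k)‖ : ℝ) : ℂ), by
        apply memℓp_gen
        have h1 : Summable (fun k => ‖(g : Zn n → ℂ) (j + k)‖ ^ p.toReal) :=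
          ((addLeftEquiv j).summable_iff).mpr hgs
        refine ((h1.mul_left ((lam j) ^ p.toReal)).congr fun k => ?_)
        rw [Complex.norm_real, Real.norm_eq_abs,
          _root_.abs_of_nonneg (mul_nonneg (hlam0 j) (norm_nonneg _)),
          Real.mul_rpow (hlam0 j) (norm_nonneg _)]⟩ with hw
    have hwapp : ∀ j k, ((w j : E) : Zn n → ℂ) k
        = ((lam j * ‖(g : Zn n → ℂ) (j + k)‖ : ℝ) : ℂ) := fun j k => rfl
    have hwnorm : ∀ j, ‖w j‖ = lam j * ‖g‖ := by
      intro j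
      rw [lp.norm_eq_tsum_rpow hpt, lp.norm_eq_tsum_rpow hpt g]
      have hcoe : ∀ k, ‖((w j : E) : Zn n → ℂ) k‖ ^ p.toReal
          = (lam j) ^ p.toReal * ‖(g : Zn n → ℂ) (j + k)‖ ^ p.toReal := fun k => by
        rw [hwapp, Complex.norm_real, Real.norm_eq_abs,
          _root_.abs_of_nonneg (mul_nonneg (hlam0 j) (norm_nonneg _)),
          Real.mul_rpow (hlam0 j) (norm_nonneg _)]
      have htr : (∑' (x : Zn n), ‖(g : Zn n → ℂ) (j + x)‖ ^ p.toReal)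
          = ∑' m, ‖(g : Zn n → ℂ) m‖ ^ p.toReal :=
        (addLeftEquiv j).tsum_eq (fun m => ‖(g : Zn n → ℂ) m‖ ^ p.toReal)
      rw [tsum_congr hcoe, tsum_mul_left, htr,
        Real.mul_rpow (Real.rpow_nonneg (hlam0 j) _)
          (tsum_nonneg fun _ => Real.rpow_nonneg (norm_nonneg _) _),
        ← Real.rpow_mul (hlam0 j), mul_one_div_cancel hpt.ne', Real.rpow_one]
    have hwnormsum : Summable (fun j => ‖w j‖) := by
      simp only [hwnorm]
      exact hlam.mul_right ‖g‖
    have hwsum : Summable w := Summable.of_norm hwnormsum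
    set u : E := ∑' j, w j with hu
    have hunorm : ‖u‖ ≤ L * ‖g‖ := by
      calc ‖u‖ ≤ ∑' j, ‖w j‖ := norm_tsum_le_tsum_norm hwnormsum
        _ = ∑' j, lam j * ‖g‖ := tsum_congr hwnorm
        _ = L * ‖g‖ := tsum_mul_right
    have hUsum : ∀ k, Summable (fun j => lam j * ‖(g : Zn n → ℂ) (j + k)‖) := fun k =>
      Summable.of_nonneg_of_le (fun j => mul_nonneg (hlam0 j) (norm_nonneg _))
        (fun j => mul_le_mul_of_nonneg_left (hgb _) (hlam0 j)) (hlam.mul_right ‖g‖)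
    have huapp : ∀ k, ‖(u : Zn n → ℂ) k‖ = ∑' j, lam j * ‖(g : Zn n → ℂ) (j + k)‖ := by
      intro k
      have h1 : (u : Zn n → ℂ) k = ∑' j, ((lam j * ‖(g : Zn n → ℂ) (j + k)‖ : ℝ) : ℂ) := by
        have h2 := (lpEval p k).map_tsum hwsum
        rw [← hu] at h2
        simpa only [lpEval_apply, hwapp] using h2
      have h3 : (∑' j, ((lam j * ‖(g : Zn n → ℂ) (j + k)‖ : ℝ) : ℂ))
          = (((∑' j, lam j * ‖(g : Zn n → ℂ) (j + k)‖ : ℝ)) : ℂ) :=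
        (Complex.ofRealCLM.map_tsum (hUsum k)).symm
      rw [h1, h3, Complex.norm_real, Real.norm_eq_abs,
        _root_.abs_of_nonneg (tsum_nonneg fun j => mul_nonneg (hlam0 j) (norm_nonneg _))]
    have hptw : ∀ k, ‖((T g - (lpProj p hp2 S) (T g) : E) : Zn n → ℂ) k‖
        ≤ ε * ‖(u : Zn n → ℂ) k‖ := by
      intro k
      have hco : ((T g - (lpProj p hp2 S) (T g) : E) : Zn n → ℂ) k
          = (T g : Zn n → ℂ) k - (if k ∈ S then (T g : Zn n → ℂ) k else 0) := by
        rw [lp.coeFn_sub, Pi.sub_apply, lpProj_apply]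
      by_cases hk : k ∈ S
      · rw [hco, if_pos hk, sub_self, norm_zero]
        positivity
      · rw [hco, if_neg hk, sub_zero, hT g k, huapp k]
        have hsl : Summable (fun m => lam (m - k)) := (subRightEquiv k).summable_iff.mpr hlam
        have hmaj : Summable (fun m => ‖(g : Zn n → ℂ) m‖ * (ω k * lam (m - k))) :=
          Summable.of_nonneg_of_le
            (fun m => mul_nonneg (norm_nonneg _) (mul_nonneg (hω0 k).le (hlam0 _)))
            (fun m => mul_le_mul_of_nonneg_right (hgb m) (mul_nonneg (hω0 k).le (hlam0 _)))
            ((hsl.mul_left (ω k)).mul_left ‖g‖)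
        have hnsum : Summable (fun m => ‖(g : Zn n → ℂ) m * Fσ k (m - k)‖) :=
          Summable.of_nonneg_of_le (fun m => norm_nonneg _)
            (fun m => by
              rw [norm_mul]
              exact mul_le_mul_of_nonneg_left (hbound k (m - k)) (norm_nonneg _)) hmaj
        calc ‖∑' m, (g : Zn n → ℂ) m * Fσ k (m - k)‖
            ≤ ∑' m, ‖(g : Zn n → ℂ) m * Fσ k (m - k)‖ := norm_tsum_le_tsum_norm hnsum
          _ ≤ ∑' m, ‖(g : Zn n → ℂ) m‖ * (ω k * lam (m - k)) :=
              Summable.tsum_le_tsum (fun m => by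
                rw [norm_mul]
                exact mul_le_mul_of_nonneg_left (hbound k (m - k)) (norm_nonneg _)) hnsum hmaj
          _ = ω k * ∑' m, lam (m - k) * ‖(g : Zn n → ℂ) m‖ := by
              rw [← tsum_mul_left]
              exact tsum_congr fun m => by ring
          _ ≤ ε * ∑' m, lam (m - k) * ‖(g : Zn n → ℂ) m‖ :=
              mul_le_mul_of_nonneg_right (hS k hk)
                (tsum_nonneg fun m => mul_nonneg (hlam0 _) (norm_nonneg _))
          _ = ε * ∑' j, lam j * ‖(g : Zn n → ℂ) (j + k)‖ := by
              congr 1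
              have htr : (∑' (j : Zn n), lam ((j + k) - k) * ‖(g : Zn n → ℂ) (j + k)‖)
                  = ∑' m, lam (m - k) * ‖(g : Zn n → ℂ) m‖ :=
                (addRightEquiv k).tsum_eq (fun m => lam (m - k) * ‖(g : Zn n → ℂ) m‖)
              rw [← htr]
              exact tsum_congr fun j => by rw [add_sub_cancel_right]
    have hnorm1 : ‖T g - (lpProj p hp2 S) (T g)‖ ≤ ε * ‖u‖ :=
      lp_norm_le_of_le hp2 hε.le _ u hptw
    calc ‖(T - (lpProj p hp2 S).comp T) g‖ = ‖T g - (lpProj p hp2 S) (T g)‖ := by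
          rw [ContinuousLinearMap.sub_apply, ContinuousLinearMap.comp_apply]
      _ ≤ ε * ‖u‖ := hnorm1
      _ ≤ ε * (L * ‖g‖) := mul_le_mul_of_nonneg_left hunorm hε.le
      _ = ε * L * ‖g‖ := (mul_assoc _ _ _).symm
  have hfin : ∀ j : ℕ, {k : Zn n | ¬ ω k < 1 / (j + 1 : ℝ)}.Finite := fun j =>
    Filter.eventually_cofinite.mp (hωlim.eventually_lt_const (by positivity))
  set S : ℕ → Finset (Zn n) := fun j => (hfin j).toFinset with hSdef
  set F : ℕ → (E →L[ℂ] E) := fun j => (lpProj p hp2 (S j)).comp T with hF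
  have hbd : ∀ j : ℕ, ‖T - F j‖ ≤ 1 / (j + 1 : ℝ) * L := fun j =>
    key _ (by positivity) _ (fun k hk => by
      have hlt : ω k < 1 / (j + 1 : ℝ) := by
        by_contra h
        exact hk ((hfin j).mem_toFinset.mpr h)
      exact hlt.le)
  have htend : Filter.Tendsto F Filter.atTop (nhds T) := by
    rw [tendsto_iff_norm_sub_tendsto_zero]
    refine squeeze_zero (g := fun j : ℕ => 1 / (j + 1 : ℝ) * L) (fun j => norm_nonneg _) (fun j => ?_) ?_
    · rw [norm_sub_rev]
      exact hbd j
    · simpa using tendsto_one_div_add_atTop_nhds_zero_nat.mul_const L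
  exact isCompactOperator_of_tendsto htend (Filter.Eventually.of_forall fun j =>
    isCompactOperator_of_finite_support hp2 (S j) ((lpProj p hp2 (S j)).comp T)
      (fun x k hk => by
        rw [ContinuousLinearMap.comp_apply, lpProj_apply, if_neg hk]))
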